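/- Let B(Ω) be a Bergman-type space and, for z ∈ Ω, let U_z f(w) := f(φ_z(w)) k_z(w). Then the following quasi-equalities hold, with implied constants independent of z, w, f: (a) ‖U_z f‖ ≍ ‖f‖ for all f ∈ B(Ω); (b) |U_z² f(w)| ≍ |f(w)| for all f ∈ B(Ω) and all w ∈ Ω; (c) |U_z* k_w(u)| ≍ |k_{φ_z(w)}(u)| for all z, w, u ∈ Ω, where U_z* is the Hilbert-space adjoint of U_z. -/

import Mathlib

open MeasureTheory Filter Topology Set ENNReal

noncomputable section

/-- The ambient space `ℂⁿ`. -/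
abbrev Cn (n : ℕ) := Fin n → ℂ

/-- A Bergman-type space on a domain `Ω ⊆ ℂⁿ`, following Mitkovski--Wick.
The data consists of the domain `Ω`, the involutions `φ_z` (axiom A.1), the
quasi-invariant metric `d` (axiom A.2), the finite measure `σ` together with the
reproducing kernel `K` of the space of holomorphic functions in `L²(σ)` (axiom A.3),
the measure `λ = ‖K_z‖² dσ` (axiom A.4), the kernel quasi-identity (axiom A.5),
the Rudin--Forelli estimates with constant `κ` (axiom A.6), and the blow-up of
`‖K_z‖` at infinity (axiom A.7). -/
structure BergmanTypeSpace (n : ℕ) where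
  Ω : Set (Cn n)
  isOpen_domain : IsOpen Ω
  isConnected_domain : IsConnected Ω
  zero_mem : (0 : Cn n) ∈ Ω
  /- A.1 : involutive holomorphic automorphisms with `φ z 0 = z`. -/
  φ : Cn n → Cn n → Cn n
  φ_mapsTo : ∀ z ∈ Ω, Set.MapsTo (φ z) Ω Ω
  φ_holo : ∀ z ∈ Ω, DifferentiableOn ℂ (φ z) Ω
  φ_invol : ∀ z ∈ Ω, ∀ w ∈ Ω, φ z (φ z w) = w
  φ_zero : ∀ z ∈ Ω, φ z 0 = z
  /- A.2 : a quasi-invariant metric on `Ω`, separable and finitely compact. -/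
  d : Cn n → Cn n → ℝ
  d_nonneg : ∀ z ∈ Ω, ∀ w ∈ Ω, 0 ≤ d z w
  d_eq_zero_iff : ∀ z ∈ Ω, ∀ w ∈ Ω, (d z w = 0 ↔ z = w)
  d_symm : ∀ z ∈ Ω, ∀ w ∈ Ω, d z w = d w z
  d_triangle : ∀ u ∈ Ω, ∀ v ∈ Ω, ∀ w ∈ Ω, d u w ≤ d u v + d v w
  Cd : ℝ
  one_le_Cd : 1 ≤ Cd
  d_quasiInvariant : ∀ z ∈ Ω, ∀ u ∈ Ω, ∀ v ∈ Ω,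
    d (φ z u) (φ z v) ≤ Cd * d u v ∧ d u v ≤ Cd * d (φ z u) (φ z v)
  d_separable : ∃ s : Set (Cn n), s.Countable ∧ s ⊆ Ω ∧
    ∀ z ∈ Ω, ∀ ε : ℝ, 0 < ε → ∃ w ∈ s, d z w < ε
  d_finitelyCompact : ∀ z ∈ Ω, ∀ r : ℝ, ∀ f : ℕ → Cn n,
    (∀ m, f m ∈ Ω ∧ d z (f m) ≤ r) →
    ∃ w, (w ∈ Ω ∧ d z w ≤ r) ∧ ∃ g : ℕ → ℕ, StrictMono g ∧
      Filter.Tendsto (fun m => d w (f (g m))) Filter.atTop (nhds 0)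
  /- A.3 : a finite measure carried by `Ω` for which the holomorphic functions in
  `L²(σ)` form a reproducing kernel Hilbert space with kernel `K`. -/
  σ : Measure (Cn n)
  σ_finite : IsFiniteMeasure σ
  σ_carried : σ Ωᶜ = 0
  K : Cn n → Cn n → ℂ
  K_holo : ∀ z ∈ Ω, DifferentiableOn ℂ (K z) Ω
  K_memL2 : ∀ z ∈ Ω, MemLp (K z) 2 σ
  K_reproducing : ∀ f : Cn n → ℂ, DifferentiableOn ℂ f Ω → MemLp f 2 σ → ∀ z ∈ Ω,
    f z = ∫ w, f w * (starRingEnd ℂ) (K z w) ∂σ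
  Knorm : Cn n → ℝ
  Knorm_def : ∀ z, Knorm z = Real.sqrt (∫ w, ‖K z w‖ ^ 2 ∂σ)
  Knorm_pos : ∀ z ∈ Ω, 0 < Knorm z
  Knorm_continuous : ∀ z ∈ Ω, ∀ ε : ℝ, 0 < ε → ∃ δ : ℝ, 0 < δ ∧
    ∀ w ∈ Ω, d z w < δ → |Knorm w - Knorm z| < ε
  k : Cn n → Cn n → ℂ
  k_def : ∀ z w, k z w = K z w / (Knorm z : ℂ)
  /- A.4 : the measure `λ = ‖K_z‖² dσ` is quasi-invariant and doubling. -/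
  lam : Measure (Cn n)
  lam_def : lam = σ.withDensity (fun z => ENNReal.ofReal (Knorm z ^ 2))
  Clam : ℝ≥0∞
  Clam_lt_top : Clam < ⊤
  lam_quasiInvariant : ∀ z ∈ Ω, ∀ E : Set (Cn n), MeasurableSet E → E ⊆ Ω →
    lam E ≤ Clam * lam (Ω ∩ φ z ⁻¹' E) ∧ lam (Ω ∩ φ z ⁻¹' E) ≤ Clam * lam E
  Cdbl : ℝ≥0∞
  Cdbl_lt_top : Cdbl < ⊤
  lam_doubling : ∀ z ∈ Ω, ∀ r : ℝ, 0 < r →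
    lam {w ∈ Ω | d z w < 2 * r} ≤ Cdbl * lam {w ∈ Ω | d z w < r}
  /- A.5 : `|⟨k_z, k_w⟩| ≃ 1 / ‖K_{φ_z(w)}‖`. -/
  C5 : ℝ
  one_le_C5 : 1 ≤ C5
  kernel_quasi : ∀ z ∈ Ω, ∀ w ∈ Ω,
    ‖∫ u, k z u * (starRingEnd ℂ) (k w u) ∂σ‖ ≤ C5 * (1 / Knorm (φ z w)) ∧
    1 / Knorm (φ z w) ≤ C5 * ‖∫ u, k z u * (starRingEnd ℂ) (k w u) ∂σ‖
  /- A.6 : the Rudin--Forelli estimates, with constant `0 ≤ κ < 2`. -/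
  κ : ℝ
  κ_nonneg : 0 ≤ κ
  κ_lt_two : κ < 2
  rudinForelli :
    (κ = 0 ∧ ∀ r : ℝ, 0 < r → ∃ C : ℝ≥0∞, C < ⊤ ∧ ∀ z ∈ Ω,
      (∫⁻ w, (‖∫ u, K z u * (starRingEnd ℂ) (K w u) ∂σ‖₊ : ℝ≥0∞) ^ r /
        ((ENNReal.ofReal (Knorm z)) ^ r * (ENNReal.ofReal (Knorm w)) ^ r) ∂lam) ≤ C) ∨
    (0 < κ ∧ ∀ r s : ℝ, κ < r → 0 < s → s < κ → ∃ C : ℝ≥0∞, C < ⊤ ∧ ∀ z ∈ Ω,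
      (∫⁻ w, (‖∫ u, K z u * (starRingEnd ℂ) (K w u) ∂σ‖₊ : ℝ≥0∞) ^ ((r + s) / 2) /
        ((ENNReal.ofReal (Knorm z)) ^ s * (ENNReal.ofReal (Knorm w)) ^ r) ∂lam) ≤ C)
  /- A.7 : `‖K_z‖ → ∞` as `d(z,0) → ∞`. -/
  Knorm_atInfty : ∀ M : ℝ, ∃ R : ℝ, ∀ z ∈ Ω, R < d z 0 → M < Knorm z

namespace BergmanTypeSpace

variable {n : ℕ}

/-- Membership in the Bergman-type space `B(Ω)`: holomorphic on `Ω` and in `L²(σ)`. -/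
def memB (S : BergmanTypeSpace n) (f : Cn n → ℂ) : Prop :=
  DifferentiableOn ℂ f S.Ω ∧ MemLp f 2 S.σ

/-- The `L²(Ω; dσ)` inner product. -/
def inn (S : BergmanTypeSpace n) (f g : Cn n → ℂ) : ℂ :=
  ∫ w, f w * (starRingEnd ℂ) (g w) ∂S.σ

/-- The `L²(Ω; dσ)` norm. -/
def nrm (S : BergmanTypeSpace n) (f : Cn n → ℂ) : ℝ :=
  Real.sqrt (∫ w, ‖f w‖ ^ 2 ∂S.σ)

/-- The orthogonal projection `P f(z) = ∫ ⟨K_w, K_z⟩ f(w) dσ(w)`. -/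
def P (S : BergmanTypeSpace n) (f : Cn n → ℂ) : Cn n → ℂ :=
  fun z => ∫ w, (S.inn (S.K w) (S.K z)) * f w ∂S.σ

/-- The Toeplitz operator `T_u = P M_u`. -/
def toeplitz (S : BergmanTypeSpace n) (u : Cn n → ℂ) (f : Cn n → ℂ) : Cn n → ℂ :=
  S.P (fun w => u w * f w)

/-- The Hankel operator `H_u = (I - P) M_u`. -/
def hankel (S : BergmanTypeSpace n) (u : Cn n → ℂ) (f : Cn n → ℂ) : Cn n → ℂ :=
  fun w => u w * f w - S.P (fun x => u x * f x) w

/-- The adapted translation `U_z f(w) = f(φ_z(w)) k_z(w)`. -/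
def U (S : BergmanTypeSpace n) (z : Cn n) (f : Cn n → ℂ) : Cn n → ℂ :=
  fun w => f (S.φ z w) * S.k z w

/-- The filter of points of `Ω` with `d(z,0) → ∞`. -/
def toInfty (S : BergmanTypeSpace n) : Filter (Cn n) :=
  (Filter.atTop.comap (fun z => S.d z 0)) ⊓ Filter.principal S.Ω

/-- `Tad` is an adjoint of `T` as an operator on `B(Ω)`. -/
def IsAdjointPair (S : BergmanTypeSpace n) (T Tad : (Cn n → ℂ) → (Cn n → ℂ)) : Prop :=
  Set.MapsTo Tad {f | S.memB f} {f | S.memB f} ∧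
  ∀ f g, S.memB f → S.memB g → S.inn (T f) g = S.inn f (Tad g)

/-- Compactness of an operator on `B(Ω)`: the image of any sequence in the unit ball
has a Cauchy (in `L²(σ)`) subsequence. -/
def IsCompactOp (S : BergmanTypeSpace n) (T : (Cn n → ℂ) → (Cn n → ℂ)) : Prop :=
  Set.MapsTo T {f | S.memB f} {f | S.memB f} ∧
  ∀ f : ℕ → (Cn n → ℂ), (∀ m, S.memB (f m) ∧ S.nrm (f m) ≤ 1) →
    ∃ g : ℕ → ℕ, StrictMono g ∧ ∀ ε : ℝ, 0 < ε → ∃ N : ℕ, ∀ p ≥ N, ∀ q ≥ N,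
      S.nrm (fun w => T (f (g p)) w - T (f (g q)) w) < ε

/-- The operator norm (of an operator defined on `B(Ω)`, with values in `L²(σ)`). -/
def opNorm (S : BergmanTypeSpace n) (T : (Cn n → ℂ) → (Cn n → ℂ)) : ℝ :=
  sInf {C : ℝ | 0 ≤ C ∧ ∀ f, S.memB f → S.nrm (T f) ≤ C * S.nrm f}

/-- The essential norm `‖T‖ₑ = inf {‖T - A‖ : A compact}`. -/
def essNorm (S : BergmanTypeSpace n) (T : (Cn n → ℂ) → (Cn n → ℂ)) : ℝ :=
  sInf {c : ℝ | ∃ A, S.IsCompactOp A ∧ c = S.opNorm (fun f => fun w => T f w - A f w)}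

/-- A strong Bergman-type space: equalities in axioms A.2, A.4 and A.5. -/
def IsStrong (S : BergmanTypeSpace n) : Prop :=
  (∀ z ∈ S.Ω, ∀ u ∈ S.Ω, ∀ v ∈ S.Ω, S.d (S.φ z u) (S.φ z v) = S.d u v) ∧
  (∀ z ∈ S.Ω, ∀ E : Set (Cn n), MeasurableSet E → E ⊆ S.Ω →
    S.lam (S.Ω ∩ S.φ z ⁻¹' E) = S.lam E) ∧
  (∀ z ∈ S.Ω, ∀ w ∈ S.Ω, ‖S.inn (S.k z) (S.k w)‖ = 1 / S.Knorm (S.φ z w))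

/-- A product `T_{u₁} T_{u₂} ⋯ T_{uₖ}` of Toeplitz operators. -/
def toeplitzProd (S : BergmanTypeSpace n) : List (Cn n → ℂ) → ((Cn n → ℂ) → (Cn n → ℂ))
  | [] => id
  | u :: us => fun f => S.toeplitz u (S.toeplitzProd us f)

/-- Symbols in `L∞(Ω)` (bounded measurable on `Ω`). -/
def IsBoundedSymbol (S : BergmanTypeSpace n) (u : Cn n → ℂ) : Prop :=
  Measurable u ∧ ∃ M : ℝ, ∀ w ∈ S.Ω, ‖u w‖ ≤ M

/-- Symbols in `BUC(Ω,d)`: bounded and `d`-uniformly continuous on `Ω`. -/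
def IsBUCSymbol (S : BergmanTypeSpace n) (u : Cn n → ℂ) : Prop :=
  S.IsBoundedSymbol u ∧
  ∀ ε : ℝ, 0 < ε → ∃ δ : ℝ, 0 < δ ∧ ∀ z ∈ S.Ω, ∀ w ∈ S.Ω, S.d z w < δ → ‖u z - u w‖ < ε

/-- A finite sum of finite products of Toeplitz operators whose symbols all satisfy `Q`. -/
def IsToeplitzPolynomial (S : BergmanTypeSpace n) (Q : (Cn n → ℂ) → Prop)
    (A : (Cn n → ℂ) → (Cn n → ℂ)) : Prop :=
  ∃ (L : ℕ) (us : Fin L → List (Cn n → ℂ)),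
    (∀ l, ∀ u ∈ us l, Q u) ∧ ∀ f x, A f x = ∑ l, S.toeplitzProd (us l) f x

/-- Membership in the norm closure of the finite sums of finite products of Toeplitz
operators with symbols satisfying `Q` (e.g. the Toeplitz algebra `𝒯_{L^∞}`). -/
def InToeplitzAlgebra (S : BergmanTypeSpace n) (Q : (Cn n → ℂ) → Prop)
    (T : (Cn n → ℂ) → (Cn n → ℂ)) : Prop :=
  Set.MapsTo T {f | S.memB f} {f | S.memB f} ∧
  ∀ ε : ℝ, 0 < ε → ∃ A, S.IsToeplitzPolynomial Q A ∧
    ∀ f, S.memB f → S.nrm (fun x => T f x - A f x) ≤ ε * S.nrm f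

end BergmanTypeSpace

namespace BergmanTypeSpace

variable {n : ℕ} (S : BergmanTypeSpace n)

lemma hΩmeas : MeasurableSet S.Ω := S.isOpen_domain.measurableSet

lemma ae_memΩ : ∀ᵐ x ∂S.σ, x ∈ S.Ω := by
  rw [MeasureTheory.ae_iff]
  exact S.σ_carried

lemma σ_res : S.σ.restrict S.Ω = S.σ :=
  Measure.restrict_eq_self_of_ae_mem S.ae_memΩ

lemma memB_K {z : Cn n} (hz : z ∈ S.Ω) : S.memB (S.K z) :=
  ⟨S.K_holo z hz, S.K_memL2 z hz⟩

lemma repro {f : Cn n → ℂ} (hf : S.memB f) {z : Cn n} (hz : z ∈ S.Ω) :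
    f z = S.inn f (S.K z) :=
  S.K_reproducing f hf.1 hf.2 z hz

lemma inn_conj (f g : Cn n → ℂ) : S.inn f g = (starRingEnd ℂ) (S.inn g f) := by
  unfold inn
  rw [← integral_conj]
  congr 1
  funext w
  simp [mul_comm]

lemma K_eq_inn {z w : Cn n} (hz : z ∈ S.Ω) (hw : w ∈ S.Ω) :
    S.K z w = S.inn (S.K z) (S.K w) :=
  S.repro (S.memB_K hz) hw

lemma K_symm {z w : Cn n} (hz : z ∈ S.Ω) (hw : w ∈ S.Ω) :
    S.K z w = (starRingEnd ℂ) (S.K w z) := by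
  rw [S.K_eq_inn hz hw, S.inn_conj, ← S.K_eq_inn hw hz]

lemma sq_Knorm (z : Cn n) : S.Knorm z ^ 2 = ∫ w, ‖S.K z w‖ ^ 2 ∂S.σ := by
  rw [S.Knorm_def]
  exact Real.sq_sqrt (integral_nonneg fun w => by positivity)

lemma K_diag {z : Cn n} (hz : z ∈ S.Ω) : S.K z z = ((S.Knorm z ^ 2 : ℝ) : ℂ) := by
  rw [S.K_eq_inn hz hz]
  unfold inn
  have : (fun w => S.K z w * (starRingEnd ℂ) (S.K z w)) =
      fun w => ((‖S.K z w‖ ^ 2 : ℝ) : ℂ) := by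
    funext w
    rw [Complex.mul_conj]
    norm_cast
    simp [Complex.normSq_eq_norm_sq]
  rw [this, S.sq_Knorm]
  exact integral_ofReal

lemma inn_k_right (f : Cn n → ℂ) (w : Cn n) :
    S.inn f (S.k w) = S.inn f (S.K w) / (S.Knorm w : ℂ) := by
  unfold inn
  rw [← integral_div]
  congr 1
  funext u
  rw [S.k_def, map_div₀, Complex.conj_ofReal]
  ring

lemma inn_k_left (g : Cn n → ℂ) (z : Cn n) :
    S.inn (S.k z) g = S.inn (S.K z) g / (S.Knorm z : ℂ) := by
  unfold inn
  rw [← integral_div]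
  congr 1
  funext u
  rw [S.k_def]
  ring

lemma norm_inn_kk {z w : Cn n} (hz : z ∈ S.Ω) (hw : w ∈ S.Ω) :
    ‖S.inn (S.k z) (S.k w)‖ = ‖S.K z w‖ / (S.Knorm z * S.Knorm w) := by
  rw [S.inn_k_right, S.inn_k_left, ← S.K_eq_inn hz hw]
  rw [norm_div, norm_div]
  rw [Complex.norm_real, Complex.norm_real]
  rw [Real.norm_of_nonneg (S.Knorm_pos z hz).le, Real.norm_of_nonneg (S.Knorm_pos w hw).le]
  rw [div_div]

lemma kernel_bounds {z w : Cn n} (hz : z ∈ S.Ω) (hw : w ∈ S.Ω) :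
    ‖S.K z w‖ * S.Knorm (S.φ z w) ≤ S.C5 * (S.Knorm z * S.Knorm w) ∧
    S.Knorm z * S.Knorm w ≤ S.C5 * (‖S.K z w‖ * S.Knorm (S.φ z w)) := by
  obtain ⟨h1, h2⟩ := S.kernel_quasi z hz w hw
  have hI : (∫ u, S.k z u * (starRingEnd ℂ) (S.k w u) ∂S.σ) = S.inn (S.k z) (S.k w) := rfl
  rw [hI, S.norm_inn_kk hz hw] at h1 h2
  have hNz := S.Knorm_pos z hz
  have hNw := S.Knorm_pos w hw
  have hNφ := S.Knorm_pos _ (S.φ_mapsTo z hz hw)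
  constructor
  · rw [mul_one_div] at h1
    rw [div_le_div_iff₀ (by positivity) hNφ] at h1
    linarith [h1]
  · rw [← mul_div_assoc, div_le_div_iff₀ hNφ (by positivity)] at h2
    linarith

lemma norm_k {z : Cn n} (hz : z ∈ S.Ω) (w : Cn n) :
    ‖S.k z w‖ = ‖S.K z w‖ / S.Knorm z := by
  rw [S.k_def, norm_div, Complex.norm_real, Real.norm_of_nonneg (S.Knorm_pos z hz).le]

lemma partb {z : Cn n} (hz : z ∈ S.Ω) (f : Cn n → ℂ) {w : Cn n} (hw : w ∈ S.Ω) :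
    ‖S.U z (S.U z f) w‖ ≤ S.C5 ^ 2 * ‖f w‖ ∧ ‖f w‖ ≤ S.C5 ^ 2 * ‖S.U z (S.U z f) w‖ := by
  have hw' : S.φ z w ∈ S.Ω := S.φ_mapsTo z hz hw
  have hval : S.U z (S.U z f) w = f w * (S.k z (S.φ z w) * S.k z w) := by
    unfold U
    rw [S.φ_invol z hz w hw]
    ring
  have hNz := S.Knorm_pos z hz
  have hNw := S.Knorm_pos w hw
  have hNw' := S.Knorm_pos _ hw'
  have hC5 : (0:ℝ) < S.C5 := lt_of_lt_of_le one_pos S.one_le_C5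
  obtain ⟨h1u, h1l⟩ := S.kernel_bounds hz hw
  obtain ⟨h2u, h2l⟩ := S.kernel_bounds hz hw'
  rw [S.φ_invol z hz w hw] at h2u h2l
  have hk1 : ‖S.k z w‖ = ‖S.K z w‖ / S.Knorm z := S.norm_k hz w
  have hk2 : ‖S.k z (S.φ z w)‖ = ‖S.K z (S.φ z w)‖ / S.Knorm z := S.norm_k hz _
  set A := ‖S.K z (S.φ z w)‖ with hA
  set B := ‖S.K z w‖ with hB
  have hA0 : 0 ≤ A := norm_nonneg _
  have hB0 : 0 ≤ B := norm_nonneg _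
  have key_u : ‖S.k z (S.φ z w)‖ * ‖S.k z w‖ ≤ S.C5 ^ 2 := by
    rw [hk1, hk2, div_mul_div_comm, div_le_iff₀ (by positivity)]
    have hm := mul_le_mul h2u h1u (by positivity) (by positivity)
    nlinarith [hm, mul_pos hNw hNw']
  have key_l : (1:ℝ) ≤ S.C5 ^ 2 * (‖S.k z (S.φ z w)‖ * ‖S.k z w‖) := by
    rw [hk1, hk2, div_mul_div_comm]
    have hm := mul_le_mul h2l h1l (by positivity) (by positivity)
    have h3 : S.Knorm z * S.Knorm z ≤ S.C5 ^ 2 * (A * B) := by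
      nlinarith [hm, mul_pos hNw hNw']
    rw [show S.C5 ^ 2 * (A * B / (S.Knorm z * S.Knorm z))
        = S.C5 ^ 2 * (A * B) / (S.Knorm z * S.Knorm z) by ring,
      le_div_iff₀ (by positivity), one_mul]
    exact h3
  constructor
  · rw [hval, norm_mul, norm_mul]
    calc ‖f w‖ * (‖S.k z (S.φ z w)‖ * ‖S.k z w‖) ≤ ‖f w‖ * S.C5 ^ 2 :=
          mul_le_mul_of_nonneg_left key_u (norm_nonneg _)
      _ = S.C5 ^ 2 * ‖f w‖ := mul_comm _ _
  · rw [hval, norm_mul, norm_mul]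
    calc ‖f w‖ = ‖f w‖ * 1 := (mul_one _).symm
      _ ≤ ‖f w‖ * (S.C5 ^ 2 * (‖S.k z (S.φ z w)‖ * ‖S.k z w‖)) :=
          mul_le_mul_of_nonneg_left key_l (norm_nonneg _)
      _ = S.C5 ^ 2 * (‖f w‖ * (‖S.k z (S.φ z w)‖ * ‖S.k z w‖)) := by ring

lemma nrm_k_one {w : Cn n} (hw : w ∈ S.Ω) : S.nrm (S.k w) = 1 := by
  unfold nrm
  have h : (fun u => ‖S.k w u‖ ^ 2) = fun u => ‖S.K w u‖ ^ 2 / S.Knorm w ^ 2 := by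
    funext u
    rw [S.norm_k hw, div_pow]
  rw [h, integral_div, ← S.sq_Knorm, div_self (pow_pos (S.Knorm_pos w hw) 2).ne', Real.sqrt_one]

lemma memB_k {w : Cn n} (hw : w ∈ S.Ω) : S.memB (S.k w) := by
  have hk : S.k w = fun u => ((S.Knorm w : ℂ))⁻¹ * S.K w u := by
    funext u
    rw [S.k_def]
    ring
  constructor
  · rw [hk]
    intro x hx
    exact ((S.K_holo w hw) x hx).const_mul _
  · rw [hk]
    exact (S.K_memL2 w hw).const_mul _

lemma norm_point_le {g : Cn n → ℂ} (hg : S.memB g) (hn : S.nrm g ≤ 1) {v : Cn n}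
    (hv : v ∈ S.Ω) : ‖g v‖ ≤ S.Knorm v := by
  haveI := S.σ_finite
  rw [S.repro hg hv]
  have h1 : ‖S.inn g (S.K v)‖ ≤ ∫ u, ‖g u‖ * ‖S.K v u‖ ∂S.σ := by
    refine (norm_integral_le_integral_norm _).trans_eq ?_
    congr 1
    funext u
    rw [norm_mul, RCLike.norm_conj]
  have h2two : (ENNReal.ofReal 2) = (2:ℝ≥0∞) := by norm_num
  have h2 : ∫ u, ‖g u‖ * ‖S.K v u‖ ∂S.σ ≤
      (∫ u, ‖g u‖ ^ (2:ℝ) ∂S.σ) ^ (1/(2:ℝ)) * (∫ u, ‖S.K v u‖ ^ (2:ℝ) ∂S.σ) ^ (1/(2:ℝ)) := by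
    refine integral_mul_le_Lp_mul_Lq_of_nonneg ⟨by norm_num, by norm_num, by norm_num⟩
      (Filter.Eventually.of_forall fun u => norm_nonneg _)
      (Filter.Eventually.of_forall fun u => norm_nonneg _) ?_ ?_
    · rw [h2two]
      exact hg.2.norm
    · rw [h2two]
      exact (S.K_memL2 v hv).norm
  have hrpow : ∀ x : ℝ, x ^ (2:ℝ) = x ^ 2 := fun x => by
    rw [show (2:ℝ) = ((2:ℕ):ℝ) by norm_num, Real.rpow_natCast]
  simp_rw [hrpow] at h2
  have hgn : (∫ u, ‖g u‖ ^ 2 ∂S.σ) ^ (1/(2:ℝ)) = S.nrm g := by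
    rw [← Real.sqrt_eq_rpow]
    rfl
  have hKn : (∫ u, ‖S.K v u‖ ^ 2 ∂S.σ) ^ (1/(2:ℝ)) = S.Knorm v := by
    rw [← Real.sqrt_eq_rpow, ← S.Knorm_def]
  rw [hgn, hKn] at h2
  calc ‖S.inn g (S.K v)‖ ≤ S.nrm g * S.Knorm v := h1.trans h2
    _ ≤ 1 * S.Knorm v := mul_le_mul_of_nonneg_right hn (S.Knorm_pos v hv).le
    _ = S.Knorm v := one_mul _

/-- A measurable function equal to `‖K_v‖²` on `Ω` (as `ℝ≥0∞`). -/
def κe (S : BergmanTypeSpace n) : Cn n → ℝ≥0∞ :=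
  fun v => ⨆ g : {g : Cn n → ℂ // S.memB g ∧ S.nrm g ≤ 1},
    S.Ω.indicator (fun x => (‖(g : Cn n → ℂ) x‖₊ : ℝ≥0∞) ^ 2) v

lemma lsc_indicator {F : Cn n → ℝ≥0∞} (hF : ContinuousOn F S.Ω) :
    LowerSemicontinuous (S.Ω.indicator F) := by
  intro x y hy
  by_cases hx : x ∈ S.Ω
  · rw [Set.indicator_of_mem hx] at hy
    have hc : ContinuousAt F x := hF.continuousAt (S.isOpen_domain.mem_nhds hx)
    have h1 : ∀ᶠ t in nhds x, F t ∈ Set.Ioi y := hc (isOpen_Ioi.mem_nhds hy)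
    have h2 : ∀ᶠ t in nhds x, t ∈ S.Ω :=
      Filter.eventually_of_mem (S.isOpen_domain.mem_nhds hx) fun t ht => ht
    filter_upwards [h1, h2] with t h1t h2t
    rwa [Set.indicator_of_mem h2t]
  · rw [Set.indicator_of_notMem hx] at hy
    exact absurd hy (by simp)

lemma κe_meas : Measurable S.κe := by
  apply LowerSemicontinuous.measurable
  apply lowerSemicontinuous_iSup
  rintro ⟨g, hgB, hgn⟩
  apply S.lsc_indicator
  have hc : ContinuousOn g S.Ω := hgB.1.continuousOn
  exact (ENNReal.continuous_pow 2).comp_continuousOn (ENNReal.continuous_coe.comp_continuousOn hc.nnnorm)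

lemma κe_eq {v : Cn n} (hv : v ∈ S.Ω) : S.κe v = ENNReal.ofReal (S.Knorm v ^ 2) := by
  apply le_antisymm
  · apply iSup_le
    rintro ⟨g, hgB, hgn⟩
    rw [Set.indicator_of_mem hv]
    have hb := S.norm_point_le hgB hgn hv
    calc ((‖g v‖₊ : ℝ≥0∞)) ^ 2 = ENNReal.ofReal (‖g v‖ ^ 2) := by
          rw [ENNReal.ofReal_pow (norm_nonneg _), ofReal_norm, enorm_eq_nnnorm]
      _ ≤ ENNReal.ofReal (S.Knorm v ^ 2) :=
          ENNReal.ofReal_le_ofReal (by nlinarith [norm_nonneg (g v)])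
  · have hNv := S.Knorm_pos v hv
    have hkv : ‖S.k v v‖ = S.Knorm v := by
      rw [S.norm_k hv, S.K_diag hv, Complex.norm_real,
        Real.norm_of_nonneg (by positivity), sq, mul_div_assoc, div_self hNv.ne', mul_one]
    refine le_trans ?_ (le_iSup _ ⟨S.k v, S.memB_k hv, (S.nrm_k_one hv).le⟩)
    rw [Set.indicator_of_mem hv]
    rw [show ((‖S.k v v‖₊ : ℝ≥0∞)) ^ 2 = ENNReal.ofReal (S.Knorm v ^ 2) by
      rw [← enorm_eq_nnnorm, ← ofReal_norm, hkv, ← ENNReal.ofReal_pow hNv.le]]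

lemma κe_ne_zero {v : Cn n} (hv : v ∈ S.Ω) : S.κe v ≠ 0 := by
  rw [S.κe_eq hv]
  simp [pow_pos (S.Knorm_pos v hv) 2, (S.Knorm_pos v hv).ne']

lemma κe_ne_top (v : Cn n) : S.κe v ≠ ⊤ := by
  by_cases hv : v ∈ S.Ω
  · rw [S.κe_eq hv]; exact ENNReal.ofReal_ne_top
  · unfold κe
    simp only [Set.indicator_of_notMem hv]
    simp

lemma lam_eq : S.lam = S.σ.withDensity S.κe := by
  rw [S.lam_def]
  exact withDensity_congr_ae (S.ae_memΩ.mono fun v hv => (S.κe_eq hv).symm)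

lemma ennreal_div_aux {a b c : ℝ≥0∞} (hc0 : c ≠ 0) (hct : c ≠ ⊤) (h : a * c ≤ b) :
    a ≤ b * c⁻¹ := by
  calc a = a * c * c⁻¹ := by rw [mul_assoc, ENNReal.mul_inv_cancel hc0 hct, mul_one]
    _ ≤ b * c⁻¹ := mul_le_mul_left h _

lemma ennreal_div_aux2 {a b c : ℝ≥0∞} (hc0 : c ≠ 0) (hct : c ≠ ⊤) (h : a ≤ b * c) :
    a * c⁻¹ ≤ b := by
  calc a * c⁻¹ ≤ b * c * c⁻¹ := mul_le_mul_left h _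
    _ = b := by rw [mul_assoc, ENNReal.mul_inv_cancel hc0 hct, mul_one]

lemma ψ_aemeas {z : Cn n} (hz : z ∈ S.Ω) (μ : Measure (Cn n)) :
    AEMeasurable (S.φ z) (μ.restrict S.Ω) :=
  ((S.φ_holo z hz).continuousOn).aemeasurable S.hΩmeas

lemma preim_eq {z : Cn n} (hz : z ∈ S.Ω) (E : Set (Cn n)) :
    S.φ z ⁻¹' E ∩ S.Ω = S.Ω ∩ S.φ z ⁻¹' (E ∩ S.Ω) := by
  ext x
  constructor
  · rintro ⟨hxE, hxΩ⟩
    exact ⟨hxΩ, hxE, S.φ_mapsTo z hz hxΩ⟩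
  · rintro ⟨hxΩ, hxE, -⟩
    exact ⟨hxE, hxΩ⟩

lemma lam_cov {z : Cn n} (hz : z ∈ S.Ω) {G : Cn n → ℝ≥0∞} (hG : Measurable G) :
    (∫⁻ x in S.Ω, G (S.φ z x) ∂S.lam) ≤ S.Clam * ∫⁻ x in S.Ω, G x ∂S.lam ∧
    (∫⁻ x in S.Ω, G x ∂S.lam) ≤ S.Clam * ∫⁻ x in S.Ω, G (S.φ z x) ∂S.lam := by
  have hψ : AEMeasurable (S.φ z) (S.lam.restrict S.Ω) := S.ψ_aemeas hz S.lam
  set ν := (S.lam.restrict S.Ω).map (S.φ z) with hν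
  have hmap : ∀ ⦃E : Set (Cn n)⦄, MeasurableSet E →
      ν E = S.lam (S.Ω ∩ S.φ z ⁻¹' (E ∩ S.Ω)) := by
    intro E hE
    rw [hν, Measure.map_apply_of_aemeasurable hψ hE,
      Measure.restrict_apply' S.hΩmeas, S.preim_eq hz]
  have hint : ∫⁻ x, G x ∂ν = ∫⁻ x in S.Ω, G (S.φ z x) ∂S.lam :=
    lintegral_map' hG.aemeasurable hψ
  constructor
  · rw [← hint]
    have hle : ν ≤ S.Clam • (S.lam.restrict S.Ω) := by
      rw [Measure.le_iff]
      intro E hE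
      rw [hmap hE]
      calc S.lam (S.Ω ∩ S.φ z ⁻¹' (E ∩ S.Ω))
          ≤ S.Clam * S.lam (E ∩ S.Ω) :=
            (S.lam_quasiInvariant z hz (E ∩ S.Ω) (hE.inter S.hΩmeas)
              Set.inter_subset_right).2
        _ = (S.Clam • (S.lam.restrict S.Ω)) E := by
            rw [Measure.smul_apply, smul_eq_mul, Measure.restrict_apply' S.hΩmeas]
    calc ∫⁻ x, G x ∂ν ≤ ∫⁻ x, G x ∂(S.Clam • (S.lam.restrict S.Ω)) :=
          lintegral_mono' hle le_rfl
      _ = S.Clam * ∫⁻ x in S.Ω, G x ∂S.lam := lintegral_smul_measure _ _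
  · rw [← hint]
    have hle : S.lam.restrict S.Ω ≤ S.Clam • ν := by
      rw [Measure.le_iff]
      intro E hE
      rw [Measure.restrict_apply' S.hΩmeas]
      calc S.lam (E ∩ S.Ω)
          ≤ S.Clam * S.lam (S.Ω ∩ S.φ z ⁻¹' (E ∩ S.Ω)) :=
            (S.lam_quasiInvariant z hz (E ∩ S.Ω) (hE.inter S.hΩmeas)
              Set.inter_subset_right).1
        _ = (S.Clam • ν) E := by
            rw [Measure.smul_apply, smul_eq_mul, hmap hE]
    calc ∫⁻ x in S.Ω, G x ∂S.lam ≤ ∫⁻ x, G x ∂(S.Clam • ν) :=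
          lintegral_mono' hle le_rfl
      _ = S.Clam * ∫⁻ x, G x ∂ν := lintegral_smul_measure _ _

lemma σ_null_of_lam_null {A : Set (Cn n)} (hA : A ⊆ S.Ω) (h : S.lam A = 0) :
    S.σ A = 0 := by
  obtain ⟨B, hAB, hBmeas, hB0⟩ := exists_measurable_superset_of_null h
  set B' := B ∩ S.Ω with hB'
  have hB'meas : MeasurableSet B' := hBmeas.inter S.hΩmeas
  have hB'0 : S.lam B' = 0 := measure_mono_null Set.inter_subset_left hB0
  rw [S.lam_eq, withDensity_apply _ hB'meas] at hB'0
  have hae : ∀ᵐ x ∂S.σ, x ∈ B' → S.κe x = 0 := by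
    rw [← ae_restrict_iff' hB'meas]
    exact (lintegral_eq_zero_iff S.κe_meas).mp hB'0
  have : ∀ᵐ x ∂S.σ, x ∉ B' := by
    filter_upwards [hae] with x hx
    intro hxB'
    exact S.κe_ne_zero hxB'.2 (hx hxB')
  have hσB' : S.σ B' = 0 := by
    have h2 := ae_iff.mp this
    simpa using h2
  exact measure_mono_null (Set.subset_inter hAB hA) hσB'

lemma null_pullback {z : Cn n} (hz : z ∈ S.Ω) {N : Set (Cn n)} (hN : MeasurableSet N)
    (h0 : S.σ N = 0) : S.σ (S.φ z ⁻¹' N ∩ S.Ω) = 0 := by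
  have hlamN : S.lam (N ∩ S.Ω) = 0 := by
    have : S.lam N = 0 := by
      rw [S.lam_eq, withDensity_apply _ hN, Measure.restrict_eq_zero.mpr h0]
      simp
    exact measure_mono_null Set.inter_subset_left this
  have hkey : S.lam (S.Ω ∩ S.φ z ⁻¹' (N ∩ S.Ω)) = 0 := by
    have := (S.lam_quasiInvariant z hz (N ∩ S.Ω) (hN.inter S.hΩmeas)
      Set.inter_subset_right).2
    rw [hlamN, mul_zero] at this
    exact le_antisymm this bot_le
  rw [S.preim_eq hz N]
  exact S.σ_null_of_lam_null Set.inter_subset_left hkey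

lemma comp_ae {z : Cn n} (hz : z ∈ S.Ω) {f f' : Cn n → ℂ} (h : f =ᵐ[S.σ] f') :
    (fun x => f (S.φ z x)) =ᵐ[S.σ.restrict S.Ω] fun x => f' (S.φ z x) := by
  have h0 : S.σ {x | f x ≠ f' x} = 0 := h
  obtain ⟨N, hsub, hNmeas, hN0⟩ := exists_measurable_superset_of_null h0
  have hnull : S.σ (S.φ z ⁻¹' N ∩ S.Ω) = 0 := S.null_pullback hz hNmeas hN0
  apply ae_iff.mpr
  rw [Measure.restrict_apply' S.hΩmeas]
  refine measure_mono_null (fun x hx => ?_) hnull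
  exact ⟨hsub hx.1, hx.2⟩

lemma est_up {z x : Cn n} (hz : z ∈ S.Ω) (hx : x ∈ S.Ω) :
    ((‖S.k z x‖₊ : ℝ≥0∞)) ^ 2 * S.κe (S.φ z x) ≤ ENNReal.ofReal (S.C5 ^ 2) * S.κe x := by
  have hx' : S.φ z x ∈ S.Ω := S.φ_mapsTo z hz hx
  have hNz := S.Knorm_pos z hz
  have hNx := S.Knorm_pos x hx
  have hNx' := S.Knorm_pos _ hx'
  have hC5 : (0:ℝ) < S.C5 := lt_of_lt_of_le one_pos S.one_le_C5
  have hreal : ‖S.k z x‖ ^ 2 * S.Knorm (S.φ z x) ^ 2 ≤ S.C5 ^ 2 * S.Knorm x ^ 2 := by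
    have h1 := (S.kernel_bounds hz hx).1
    have h2 : ‖S.k z x‖ * S.Knorm (S.φ z x) ≤ S.C5 * S.Knorm x := by
      rw [S.norm_k hz x, div_mul_eq_mul_div, div_le_iff₀ hNz]
      nlinarith [h1]
    nlinarith [h2, norm_nonneg (S.k z x), hNx'.le, mul_nonneg (norm_nonneg (S.k z x)) hNx'.le]
  rw [S.κe_eq hx', S.κe_eq hx]
  calc ((‖S.k z x‖₊ : ℝ≥0∞)) ^ 2 * ENNReal.ofReal (S.Knorm (S.φ z x) ^ 2)
      = ENNReal.ofReal (‖S.k z x‖ ^ 2 * S.Knorm (S.φ z x) ^ 2) := by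
        rw [ENNReal.ofReal_mul (by positivity), ENNReal.ofReal_pow (norm_nonneg _),
          ofReal_norm, enorm_eq_nnnorm]
    _ ≤ ENNReal.ofReal (S.C5 ^ 2 * S.Knorm x ^ 2) := ENNReal.ofReal_le_ofReal hreal
    _ = ENNReal.ofReal (S.C5 ^ 2) * ENNReal.ofReal (S.Knorm x ^ 2) := by
        rw [ENNReal.ofReal_mul (by positivity)]

lemma est_lo {z x : Cn n} (hz : z ∈ S.Ω) (hx : x ∈ S.Ω) :
    S.κe x ≤ ENNReal.ofReal (S.C5 ^ 2) * (((‖S.k z x‖₊ : ℝ≥0∞)) ^ 2 * S.κe (S.φ z x)) := by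
  have hx' : S.φ z x ∈ S.Ω := S.φ_mapsTo z hz hx
  have hNz := S.Knorm_pos z hz
  have hNx := S.Knorm_pos x hx
  have hNx' := S.Knorm_pos _ hx'
  have hC5 : (0:ℝ) < S.C5 := lt_of_lt_of_le one_pos S.one_le_C5
  have hreal : S.Knorm x ^ 2 ≤ S.C5 ^ 2 * (‖S.k z x‖ ^ 2 * S.Knorm (S.φ z x) ^ 2) := by
    have h1 := (S.kernel_bounds hz hx).2
    have h2 : S.Knorm x ≤ S.C5 * (‖S.k z x‖ * S.Knorm (S.φ z x)) := by
      rw [S.norm_k hz x, div_mul_eq_mul_div, ← mul_div_assoc, le_div_iff₀ hNz]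
      nlinarith [h1]
    nlinarith [h2, hNx.le, norm_nonneg (S.k z x), hNx'.le,
      mul_nonneg (norm_nonneg (S.k z x)) hNx'.le]
  rw [S.κe_eq hx', S.κe_eq hx]
  calc ENNReal.ofReal (S.Knorm x ^ 2)
      ≤ ENNReal.ofReal (S.C5 ^ 2 * (‖S.k z x‖ ^ 2 * S.Knorm (S.φ z x) ^ 2)) :=
        ENNReal.ofReal_le_ofReal hreal
    _ = ENNReal.ofReal (S.C5 ^ 2) * (((‖S.k z x‖₊ : ℝ≥0∞)) ^ 2
          * ENNReal.ofReal (S.Knorm (S.φ z x) ^ 2)) := by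
        rw [ENNReal.ofReal_mul (by positivity), ENNReal.ofReal_mul (by positivity),
          ENNReal.ofReal_pow (norm_nonneg _), ofReal_norm, enorm_eq_nnnorm]

lemma main_cov {z : Cn n} (hz : z ∈ S.Ω) {f : Cn n → ℂ} (hf : AEStronglyMeasurable f S.σ) :
    (∫⁻ x, ((‖S.U z f x‖₊ : ℝ≥0∞)) ^ 2 ∂S.σ)
      ≤ (ENNReal.ofReal (S.C5 ^ 2) * S.Clam) * ∫⁻ x, ((‖f x‖₊ : ℝ≥0∞)) ^ 2 ∂S.σ ∧
    (∫⁻ x, ((‖f x‖₊ : ℝ≥0∞)) ^ 2 ∂S.σ)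
      ≤ (ENNReal.ofReal (S.C5 ^ 2) * S.Clam) * ∫⁻ x, ((‖S.U z f x‖₊ : ℝ≥0∞)) ^ 2 ∂S.σ := by
  haveI := S.σ_finite
  have hfm : AEMeasurable f S.σ := hf.aemeasurable
  set f' := hfm.mk f with hf'def
  have hf'meas : Measurable f' := hfm.measurable_mk
  have hff' : f =ᵐ[S.σ] f' := hfm.ae_eq_mk
  set C : ℝ≥0∞ := ENNReal.ofReal (S.C5 ^ 2) with hC
  have hCne : C ≠ ⊤ := ENNReal.ofReal_ne_top
  set G : Cn n → ℝ≥0∞ := fun v => ((‖f' v‖₊ : ℝ≥0∞)) ^ 2 * (S.κe v)⁻¹ with hGdef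
  have hGmeas : Measurable G :=
    ((hf'meas.nnnorm.coe_nnreal_ennreal).pow_const 2).mul S.κe_meas.inv
  have hUnorm : ∀ x, ((‖S.U z f x‖₊ : ℝ≥0∞)) ^ 2
      = ((‖f (S.φ z x)‖₊ : ℝ≥0∞)) ^ 2 * ((‖S.k z x‖₊ : ℝ≥0∞)) ^ 2 := by
    intro x
    show ((‖f (S.φ z x) * S.k z x‖₊ : ℝ≥0∞)) ^ 2 = _
    rw [nnnorm_mul, ENNReal.coe_mul, mul_pow]
  have hψlam : AEMeasurable (S.φ z) (S.lam.restrict S.Ω) := S.ψ_aemeas hz S.lam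
  have hrw : (S.σ.restrict S.Ω).withDensity S.κe = S.lam.restrict S.Ω := by
    rw [S.lam_eq, restrict_withDensity S.hΩmeas]
  have conv : ∀ H : Cn n → ℝ≥0∞, AEMeasurable H (S.lam.restrict S.Ω) →
      ∫⁻ x in S.Ω, H x ∂S.lam = ∫⁻ x in S.Ω, S.κe x * H x ∂S.σ := by
    intro H hH
    calc ∫⁻ x in S.Ω, H x ∂S.lam = ∫⁻ x, (S.κe * H) x ∂(S.σ.restrict S.Ω) := by
          rw [← hrw]
          exact lintegral_withDensity_eq_lintegral_mul₀' S.κe_meas.aemeasurable (by rwa [hrw])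
      _ = ∫⁻ x in S.Ω, S.κe x * H x ∂S.σ := rfl
  have haeΩ : ∀ᵐ x ∂S.σ.restrict S.Ω, x ∈ S.Ω := ae_restrict_mem S.hΩmeas
  have hae1 : ∀ᵐ x ∂S.σ.restrict S.Ω, f (S.φ z x) = f' (S.φ z x) := S.comp_ae hz hff'
  set A := ∫⁻ x in S.Ω, ((‖f (S.φ z x)‖₊ : ℝ≥0∞)) ^ 2 * ((‖S.k z x‖₊ : ℝ≥0∞)) ^ 2 ∂S.σ with hA
  set B := ∫⁻ x in S.Ω, ((‖f x‖₊ : ℝ≥0∞)) ^ 2 ∂S.σ with hB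
  have hAeq : ∫⁻ x, ((‖S.U z f x‖₊ : ℝ≥0∞)) ^ 2 ∂S.σ = A := by
    conv_lhs => rw [← S.σ_res]
    exact lintegral_congr hUnorm
  have hBeq : ∫⁻ x, ((‖f x‖₊ : ℝ≥0∞)) ^ 2 ∂S.σ = B := by
    conv_lhs => rw [← S.σ_res]
  have hA' : A = ∫⁻ x in S.Ω, ((‖f' (S.φ z x)‖₊ : ℝ≥0∞)) ^ 2 * ((‖S.k z x‖₊ : ℝ≥0∞)) ^ 2 ∂S.σ :=
    lintegral_congr_ae (hae1.mono fun x hx => by simp only [hx])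
  have hB' : B = ∫⁻ x in S.Ω, ((‖f' x‖₊ : ℝ≥0∞)) ^ 2 ∂S.σ :=
    lintegral_congr_ae ((ae_restrict_of_ae hff').mono fun x hx => by simp only [hx])
  have hGκ : ∀ᵐ x ∂S.σ.restrict S.Ω, S.κe x * G x = ((‖f' x‖₊ : ℝ≥0∞)) ^ 2 := by
    filter_upwards [haeΩ] with x hx
    calc S.κe x * (((‖f' x‖₊ : ℝ≥0∞)) ^ 2 * (S.κe x)⁻¹)
        = ((‖f' x‖₊ : ℝ≥0∞)) ^ 2 * (S.κe x * (S.κe x)⁻¹) := by ring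
      _ = ((‖f' x‖₊ : ℝ≥0∞)) ^ 2 := by
          rw [ENNReal.mul_inv_cancel (S.κe_ne_zero hx) (S.κe_ne_top x), mul_one]
  have hGlam : ∫⁻ x in S.Ω, G x ∂S.lam = B := by
    rw [conv G hGmeas.aemeasurable, hB']
    exact lintegral_congr_ae hGκ
  have hGψ : AEMeasurable (fun x => G (S.φ z x)) (S.lam.restrict S.Ω) :=
    hGmeas.comp_aemeasurable hψlam
  have hGψconv : ∫⁻ x in S.Ω, G (S.φ z x) ∂S.lam = ∫⁻ x in S.Ω, S.κe x * G (S.φ z x) ∂S.σ :=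
    conv _ hGψ
  obtain ⟨hcov1, hcov2⟩ := S.lam_cov hz hGmeas
  constructor
  · rw [hAeq, hBeq]
    calc A = ∫⁻ x in S.Ω, ((‖f' (S.φ z x)‖₊ : ℝ≥0∞)) ^ 2 * ((‖S.k z x‖₊ : ℝ≥0∞)) ^ 2 ∂S.σ := hA'
      _ ≤ ∫⁻ x in S.Ω, C * (S.κe x * G (S.φ z x)) ∂S.σ := by
          apply lintegral_mono_ae
          filter_upwards [haeΩ] with x hx
          have hx' : S.φ z x ∈ S.Ω := S.φ_mapsTo z hz hx
          have h2 : ((‖S.k z x‖₊ : ℝ≥0∞)) ^ 2 ≤ C * S.κe x * (S.κe (S.φ z x))⁻¹ :=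
            ennreal_div_aux (S.κe_ne_zero hx') (S.κe_ne_top _) (S.est_up hz hx)
          calc ((‖f' (S.φ z x)‖₊ : ℝ≥0∞)) ^ 2 * ((‖S.k z x‖₊ : ℝ≥0∞)) ^ 2
              ≤ ((‖f' (S.φ z x)‖₊ : ℝ≥0∞)) ^ 2 * (C * S.κe x * (S.κe (S.φ z x))⁻¹) :=
                mul_le_mul_right h2 _
            _ = C * (S.κe x * G (S.φ z x)) := by rw [hGdef]; ring
      _ = C * ∫⁻ x in S.Ω, S.κe x * G (S.φ z x) ∂S.σ := lintegral_const_mul' _ _ hCne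
      _ = C * ∫⁻ x in S.Ω, G (S.φ z x) ∂S.lam := by rw [hGψconv]
      _ ≤ C * (S.Clam * ∫⁻ x in S.Ω, G x ∂S.lam) := mul_le_mul_right hcov1 _
      _ = (C * S.Clam) * B := by rw [hGlam, mul_assoc]
  · rw [hAeq, hBeq]
    calc B = ∫⁻ x in S.Ω, G x ∂S.lam := hGlam.symm
      _ ≤ S.Clam * ∫⁻ x in S.Ω, G (S.φ z x) ∂S.lam := hcov2
      _ = S.Clam * ∫⁻ x in S.Ω, S.κe x * G (S.φ z x) ∂S.σ := by rw [hGψconv]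
      _ ≤ S.Clam * ∫⁻ x in S.Ω,
            C * (((‖f' (S.φ z x)‖₊ : ℝ≥0∞)) ^ 2 * ((‖S.k z x‖₊ : ℝ≥0∞)) ^ 2) ∂S.σ := by
          apply mul_le_mul_right
          apply lintegral_mono_ae
          filter_upwards [haeΩ] with x hx
          have hx' : S.φ z x ∈ S.Ω := S.φ_mapsTo z hz hx
          have h1' : S.κe x ≤ (C * ((‖S.k z x‖₊ : ℝ≥0∞)) ^ 2) * S.κe (S.φ z x) := by
            rw [mul_assoc]
            exact S.est_lo hz hx
          have h2 : S.κe x * (S.κe (S.φ z x))⁻¹ ≤ C * ((‖S.k z x‖₊ : ℝ≥0∞)) ^ 2 :=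
            ennreal_div_aux2 (S.κe_ne_zero hx') (S.κe_ne_top _) h1'
          calc S.κe x * G (S.φ z x)
              = ((‖f' (S.φ z x)‖₊ : ℝ≥0∞)) ^ 2 * (S.κe x * (S.κe (S.φ z x))⁻¹) := by
                rw [hGdef]; ring
            _ ≤ ((‖f' (S.φ z x)‖₊ : ℝ≥0∞)) ^ 2 * (C * ((‖S.k z x‖₊ : ℝ≥0∞)) ^ 2) :=
                mul_le_mul_right h2 _
            _ = C * (((‖f' (S.φ z x)‖₊ : ℝ≥0∞)) ^ 2 * ((‖S.k z x‖₊ : ℝ≥0∞)) ^ 2) := by ring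
      _ = S.Clam * (C * ∫⁻ x in S.Ω,
            ((‖f' (S.φ z x)‖₊ : ℝ≥0∞)) ^ 2 * ((‖S.k z x‖₊ : ℝ≥0∞)) ^ 2 ∂S.σ) := by
          rw [lintegral_const_mul' _ _ hCne]
      _ = (C * S.Clam) * A := by rw [← hA']; ring

lemma nrm_eq_lintegral {g : Cn n → ℂ} (hg : AEStronglyMeasurable g S.σ) :
    S.nrm g = Real.sqrt ((∫⁻ x, ((‖g x‖₊ : ℝ≥0∞)) ^ 2 ∂S.σ).toReal) := by
  unfold nrm
  rw [integral_eq_lintegral_of_nonneg_ae (Filter.Eventually.of_forall fun x => sq_nonneg _)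
    ((hg.norm.aemeasurable.pow_const 2).aestronglyMeasurable)]
  congr 2
  apply lintegral_congr
  intro x
  rw [ENNReal.ofReal_pow (norm_nonneg _), ofReal_norm, enorm_eq_nnnorm]

lemma memlp_iff_lintegral {g : Cn n → ℂ} (hg : AEStronglyMeasurable g S.σ) :
    MemLp g 2 S.σ ↔ (∫⁻ x, ((‖g x‖₊ : ℝ≥0∞)) ^ 2 ∂S.σ) < ⊤ := by
  have hpow : ∀ x : ℝ≥0∞, x ^ (2 : ℝ) = x ^ (2 : ℕ) := fun x => by
    rw [show (2:ℝ) = ((2:ℕ):ℝ) by norm_num, ENNReal.rpow_natCast]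
  have hsn : eLpNorm g 2 S.σ = (∫⁻ x, ((‖g x‖₊ : ℝ≥0∞)) ^ 2 ∂S.σ) ^ (1/(2:ℝ)) := by
    rw [eLpNorm_eq_lintegral_rpow_enorm_toReal two_ne_zero ENNReal.ofNat_ne_top]
    norm_num [enorm_eq_nnnorm]
  constructor
  · intro h
    have := h.2
    rw [hsn] at this
    by_contra hcon
    rw [not_lt, top_le_iff] at hcon
    rw [hcon] at this
    simp [ENNReal.top_rpow_of_pos] at this
  · intro h
    refine ⟨hg, ?_⟩
    rw [hsn]
    exact ENNReal.rpow_lt_top_of_nonneg (by norm_num) h.ne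

lemma k_contOn {z : Cn n} (hz : z ∈ S.Ω) : ContinuousOn (S.k z) S.Ω := by
  rw [show S.k z = fun w => S.K z w / (S.Knorm z : ℂ) from funext fun w => S.k_def z w]
  exact (S.K_holo z hz).continuousOn.div_const _

lemma aesm_U {z : Cn n} (hz : z ∈ S.Ω) {f : Cn n → ℂ} (hf : AEStronglyMeasurable f S.σ) :
    AEStronglyMeasurable (S.U z f) S.σ := by
  have hfm : AEMeasurable f S.σ := hf.aemeasurable
  have h1 : AEMeasurable (fun x => f (S.φ z x)) S.σ := by
    rw [← S.σ_res]
    have hmk : AEMeasurable (fun x => hfm.mk f (S.φ z x)) (S.σ.restrict S.Ω) :=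
      hfm.measurable_mk.comp_aemeasurable (S.ψ_aemeas hz S.σ)
    exact hmk.congr (S.comp_ae hz hfm.ae_eq_mk).symm
  have h2 : AEMeasurable (S.k z) S.σ := by
    rw [← S.σ_res]
    exact (S.k_contOn hz).aemeasurable S.hΩmeas
  exact (h1.mul h2).aestronglyMeasurable

lemma memB_U {z : Cn n} (hz : z ∈ S.Ω) {f : Cn n → ℂ} (hf : S.memB f) :
    S.memB (S.U z f) := by
  have hU : AEStronglyMeasurable (S.U z f) S.σ := S.aesm_U hz hf.2.1
  constructor
  · have h1 : DifferentiableOn ℂ (fun x => f (S.φ z x)) S.Ω :=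
      hf.1.comp (S.φ_holo z hz) (S.φ_mapsTo z hz)
    have h2 : DifferentiableOn ℂ (S.k z) S.Ω := by
      rw [show S.k z = fun w => ((S.Knorm z : ℂ))⁻¹ * S.K z w from
        funext fun w => by rw [S.k_def]; ring]
      intro x hx
      exact ((S.K_holo z hz) x hx).const_mul _
    exact h1.mul h2
  · refine (S.memlp_iff_lintegral hU).mpr ?_
    have hB := (S.memlp_iff_lintegral hf.2.1).mp hf.2
    refine lt_of_le_of_lt (S.main_cov hz hf.2.1).1 ?_
    exact ENNReal.mul_lt_top (ENNReal.mul_lt_top ENNReal.ofReal_lt_top S.Clam_lt_top) hB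

lemma parta {z : Cn n} (hz : z ∈ S.Ω) {f : Cn n → ℂ} (hf : S.memB f) :
    S.nrm (S.U z f) ≤ (Real.sqrt ((ENNReal.ofReal (S.C5 ^ 2) * S.Clam).toReal) + 1) * S.nrm f ∧
    S.nrm f ≤ (Real.sqrt ((ENNReal.ofReal (S.C5 ^ 2) * S.Clam).toReal) + 1) * S.nrm (S.U z f) := by
  obtain ⟨h1, h2⟩ := S.main_cov hz hf.2.1
  set CC := ENNReal.ofReal (S.C5 ^ 2) * S.Clam with hCC
  set c := Real.sqrt CC.toReal + 1 with hc
  have hCCne : CC ≠ ⊤ := (ENNReal.mul_lt_top ENNReal.ofReal_lt_top S.Clam_lt_top).ne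
  have hB : (∫⁻ x, ((‖f x‖₊ : ℝ≥0∞)) ^ 2 ∂S.σ) < ⊤ := (S.memlp_iff_lintegral hf.2.1).mp hf.2
  have hUm : AEStronglyMeasurable (S.U z f) S.σ := S.aesm_U hz hf.2.1
  have hA : (∫⁻ x, ((‖S.U z f x‖₊ : ℝ≥0∞)) ^ 2 ∂S.σ) < ⊤ :=
    lt_of_le_of_lt h1 (ENNReal.mul_lt_top hCCne.lt_top hB)
  have hcsq : CC.toReal ≤ c ^ 2 := by
    have h0 : 0 ≤ Real.sqrt CC.toReal := Real.sqrt_nonneg _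
    have : Real.sqrt CC.toReal ^ 2 = CC.toReal := Real.sq_sqrt ENNReal.toReal_nonneg
    nlinarith
  have hcpos : 0 ≤ c := by positivity
  rw [S.nrm_eq_lintegral hUm, S.nrm_eq_lintegral hf.2.1]
  constructor
  · have h1' : (∫⁻ x, ((‖S.U z f x‖₊ : ℝ≥0∞)) ^ 2 ∂S.σ).toReal
        ≤ c ^ 2 * (∫⁻ x, ((‖f x‖₊ : ℝ≥0∞)) ^ 2 ∂S.σ).toReal := by
      refine le_trans ?_ (mul_le_mul_of_nonneg_right hcsq ENNReal.toReal_nonneg)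
      rw [← ENNReal.toReal_mul]
      exact ENNReal.toReal_mono (ENNReal.mul_lt_top hCCne.lt_top hB).ne h1
    calc Real.sqrt (∫⁻ x, ((‖S.U z f x‖₊ : ℝ≥0∞)) ^ 2 ∂S.σ).toReal
        ≤ Real.sqrt (c ^ 2 * (∫⁻ x, ((‖f x‖₊ : ℝ≥0∞)) ^ 2 ∂S.σ).toReal) := Real.sqrt_le_sqrt h1'
      _ = c * Real.sqrt (∫⁻ x, ((‖f x‖₊ : ℝ≥0∞)) ^ 2 ∂S.σ).toReal := by
          rw [Real.sqrt_mul (by positivity), Real.sqrt_sq hcpos]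
  · have h2' : (∫⁻ x, ((‖f x‖₊ : ℝ≥0∞)) ^ 2 ∂S.σ).toReal
        ≤ c ^ 2 * (∫⁻ x, ((‖S.U z f x‖₊ : ℝ≥0∞)) ^ 2 ∂S.σ).toReal := by
      refine le_trans ?_ (mul_le_mul_of_nonneg_right hcsq ENNReal.toReal_nonneg)
      rw [← ENNReal.toReal_mul]
      exact ENNReal.toReal_mono (ENNReal.mul_lt_top hCCne.lt_top hA).ne h2
    calc Real.sqrt (∫⁻ x, ((‖f x‖₊ : ℝ≥0∞)) ^ 2 ∂S.σ).toReal
        ≤ Real.sqrt (c ^ 2 * (∫⁻ x, ((‖S.U z f x‖₊ : ℝ≥0∞)) ^ 2 ∂S.σ).toReal) :=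
          Real.sqrt_le_sqrt h2'
      _ = c * Real.sqrt (∫⁻ x, ((‖S.U z f x‖₊ : ℝ≥0∞)) ^ 2 ∂S.σ).toReal := by
          rw [Real.sqrt_mul (by positivity), Real.sqrt_sq hcpos]

lemma partc {z : Cn n} (hz : z ∈ S.Ω) {V : (Cn n → ℂ) → (Cn n → ℂ)}
    (hV : S.IsAdjointPair (S.U z) V) {w : Cn n} (hw : w ∈ S.Ω) {u : Cn n} (hu : u ∈ S.Ω) :
    ‖V (S.k w) u‖ ≤ S.C5 * ‖S.k (S.φ z w) u‖ ∧
    ‖S.k (S.φ z w) u‖ ≤ S.C5 * ‖V (S.k w) u‖ := by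
  have hw' : S.φ z w ∈ S.Ω := S.φ_mapsTo z hz hw
  have hNz := S.Knorm_pos z hz
  have hNw := S.Knorm_pos w hw
  have hNw' := S.Knorm_pos _ hw'
  have hgB : S.memB (S.U z (S.K u)) := S.memB_U hz (S.memB_K hu)
  have hVk : S.memB (V (S.k w)) := hV.1 (S.memB_k hw)
  have e1 : S.inn (S.U z (S.K u)) (S.k w) = S.inn (S.K u) (V (S.k w)) :=
    hV.2 (S.K u) (S.k w) (S.memB_K hu) (S.memB_k hw)
  have e2 : S.inn (S.K u) (V (S.k w)) = (starRingEnd ℂ) (V (S.k w) u) := by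
    rw [S.inn_conj, ← S.repro hVk hu]
  have e3 : S.inn (S.U z (S.K u)) (S.k w) = S.U z (S.K u) w / (S.Knorm w : ℂ) := by
    rw [S.inn_k_right, ← S.repro hgB hw]
  have hmain : (starRingEnd ℂ) (V (S.k w) u) = S.U z (S.K u) w / (S.Knorm w : ℂ) :=
    (e2.symm.trans e1.symm).trans e3
  have hnorm : ‖V (S.k w) u‖ = ‖S.K u (S.φ z w)‖ * ‖S.k z w‖ / S.Knorm w := by
    calc ‖V (S.k w) u‖ = ‖(starRingEnd ℂ) (V (S.k w) u)‖ := (RCLike.norm_conj _).symm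
      _ = ‖S.U z (S.K u) w / (S.Knorm w : ℂ)‖ := by rw [hmain]
      _ = ‖S.U z (S.K u) w‖ / S.Knorm w := by
          rw [norm_div, Complex.norm_real, Real.norm_of_nonneg hNw.le]
      _ = ‖S.K u (S.φ z w)‖ * ‖S.k z w‖ / S.Knorm w := by
          rw [show S.U z (S.K u) w = S.K u (S.φ z w) * S.k z w from rfl, norm_mul]
  have hsym : ‖S.K u (S.φ z w)‖ = ‖S.K (S.φ z w) u‖ := by
    rw [S.K_symm hu hw', RCLike.norm_conj]
  have hk' : ‖S.k (S.φ z w) u‖ = ‖S.K (S.φ z w) u‖ / S.Knorm (S.φ z w) := S.norm_k hw' u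
  obtain ⟨b1, b2⟩ := S.kernel_bounds hz hw
  have hkzw : ‖S.k z w‖ = ‖S.K z w‖ / S.Knorm z := S.norm_k hz w
  have hq1 : ‖S.k z w‖ * S.Knorm (S.φ z w) ≤ S.C5 * S.Knorm w := by
    rw [hkzw, div_mul_eq_mul_div, div_le_iff₀ hNz]
    nlinarith [b1]
  have hq2 : S.Knorm w ≤ S.C5 * (‖S.k z w‖ * S.Knorm (S.φ z w)) := by
    rw [hkzw, div_mul_eq_mul_div, ← mul_div_assoc, le_div_iff₀ hNz]
    nlinarith [b2]
  set a := ‖S.K (S.φ z w) u‖ with ha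
  have ha0 : 0 ≤ a := norm_nonneg _
  have hkn0 : 0 ≤ ‖S.k z w‖ := norm_nonneg _
  constructor
  · rw [hnorm, hsym, hk']
    rw [show S.C5 * (a / S.Knorm (S.φ z w)) = S.C5 * a / S.Knorm (S.φ z w) by ring,
      div_le_div_iff₀ hNw hNw']
    nlinarith [mul_le_mul_of_nonneg_left hq1 ha0]
  · rw [hnorm, hsym, hk']
    rw [show S.C5 * (a * ‖S.k z w‖ / S.Knorm w) = S.C5 * (a * ‖S.k z w‖) / S.Knorm w by ring,
      div_le_div_iff₀ hNw' hNw]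
    nlinarith [mul_le_mul_of_nonneg_left hq2 ha0]

end BergmanTypeSpace

/-- the quasi-equalities for the translation operators `U_z`:
(a) `‖U_z f‖ ≍ ‖f‖`; (b) `|U_z² f| ≍ |f|`; (c) `|U_z* k_w| ≍ |k_{φ_z(w)}|`,
with constants independent of `z, w, u, f`. -/
theorem statement3 (n : ℕ) (S : BergmanTypeSpace n) :
    (∃ c₁ c₂ : ℝ, 0 < c₁ ∧ 0 < c₂ ∧ ∀ z ∈ S.Ω, ∀ f : Cn n → ℂ, S.memB f →
      S.nrm (S.U z f) ≤ c₁ * S.nrm f ∧ S.nrm f ≤ c₂ * S.nrm (S.U z f)) ∧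
    (∃ c₁ c₂ : ℝ, 0 < c₁ ∧ 0 < c₂ ∧ ∀ z ∈ S.Ω, ∀ f : Cn n → ℂ, S.memB f → ∀ w ∈ S.Ω,
      ‖S.U z (S.U z f) w‖ ≤ c₁ * ‖f w‖ ∧ ‖f w‖ ≤ c₂ * ‖S.U z (S.U z f) w‖) ∧
    (∃ c₁ c₂ : ℝ, 0 < c₁ ∧ 0 < c₂ ∧ ∀ z ∈ S.Ω,
      ∀ V : (Cn n → ℂ) → (Cn n → ℂ), S.IsAdjointPair (S.U z) V →
        ∀ w ∈ S.Ω, ∀ u ∈ S.Ω,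
          ‖V (S.k w) u‖ ≤ c₁ * ‖S.k (S.φ z w) u‖ ∧
          ‖S.k (S.φ z w) u‖ ≤ c₂ * ‖V (S.k w) u‖) := by
  have hC5 : (0:ℝ) < S.C5 := lt_of_lt_of_le one_pos S.one_le_C5
  refine ⟨?_, ?_, ?_⟩
  · exact ⟨Real.sqrt ((ENNReal.ofReal (S.C5 ^ 2) * S.Clam).toReal) + 1,
      Real.sqrt ((ENNReal.ofReal (S.C5 ^ 2) * S.Clam).toReal) + 1,
      by positivity, by positivity,
      fun z hz f hf => S.parta hz hf⟩
  · exact ⟨S.C5 ^ 2, S.C5 ^ 2, by positivity, by positivity,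
      fun z hz f _ w hw => S.partb hz f hw⟩
  · exact ⟨S.C5, S.C5, hC5, hC5,
      fun z hz V hV w hw u hu => S.partc hz hV hw hu⟩
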